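/- arXiv:1707.04823 — 3 statements merged into one kernel-verified Lean document; each statement's English description precedes it below -/
import Mathlib

section
/- For all natural numbers a, b, c ≥ 1: 5^(^(a+c) 5 + ^(b+c) 5) ≤ ^(a+b+c+1) 5, where ^n 5 denotes tetration. -/
/-- Tetration tower of 5's: `tow 1 = 5`, `tow (n+1) = 5 ^ tow n`. -/
def tow : ℕ → ℕ
  | 0 => 1
  | n + 1 => 5 ^ tow n

lemma two_mul_le_pow (t : ℕ) : 2 * t ≤ 5 ^ t := by
  induction t with
  | zero => simp
  | succ n ih =>
    have h1 : (1:ℕ) ≤ 5 ^ n := Nat.one_le_pow _ _ (by norm_num)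
    calc 2 * (n + 1) = 2 * n + 2 := by ring
    _ ≤ 5 ^ n + 2 := by omega
    _ ≤ 5 ^ n + 4 * 5 ^ n := by omega
    _ = 5 ^ (n + 1) := by ring

lemma tow_mono : Monotone tow := by
  apply monotone_nat_of_le_succ
  intro n
  show tow n ≤ 5 ^ tow n
  exact Nat.le_of_lt (Nat.lt_pow_self (by norm_num : 1 < 5))

theorem pow_tow_add_tow_le (a b c : ℕ) (ha : 1 ≤ a) (hb : 1 ≤ b) (hc : 1 ≤ c) :
    5 ^ (tow (a + c) + tow (b + c)) ≤ tow (a + b + c + 1) := by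
  obtain ⟨a', rfl⟩ := Nat.exists_eq_add_of_le ha
  obtain ⟨b', rfl⟩ := Nat.exists_eq_add_of_le hb
  have h1 : tow (1 + a' + c) ≤ tow (a' + b' + c + 1) := tow_mono (by omega)
  have h2 : tow (1 + b' + c) ≤ tow (a' + b' + c + 1) := tow_mono (by omega)
  have hsum : tow (1 + a' + c) + tow (1 + b' + c) ≤ tow (a' + b' + c + 2) := by
    calc tow (1 + a' + c) + tow (1 + b' + c) ≤ 2 * tow (a' + b' + c + 1) := by omega
    _ ≤ 5 ^ tow (a' + b' + c + 1) := two_mul_le_pow _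
    _ = tow (a' + b' + c + 2) := rfl
  have key : 5 ^ (tow (1 + a' + c) + tow (1 + b' + c)) ≤ 5 ^ tow (a' + b' + c + 2) :=
    Nat.pow_le_pow_right (by norm_num) hsum
  have : (5:ℕ) ^ tow (a' + b' + c + 2) = tow (a' + b' + c + 3) := rfl
  calc 5 ^ (tow (1 + a' + c) + tow (1 + b' + c)) ≤ tow (a' + b' + c + 3) := by
        rw [← this]; exact key
  _ = tow (1 + a' + (1 + b') + c + 1) := by ring_nf
end

section
/- For all natural numbers a, b, c ≥ 1: 5^(^(a+c) 5 + ^(b+c) 5) < ^(5^(a+b) + c) 5. (This is the rank inequality justifying the Distribution(a) step: replacing (A∧B)∨C by (A∨C)∧(B∨C) strictly reduces rank.) -/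
lemma tow_pos (n : ℕ) : 1 ≤ tow n := by
  induction n with
  | zero => simp [tow]
  | succ n ih => simpa [tow] using Nat.one_le_pow _ _ (by norm_num)

lemma two_mul_lt_pow (t : ℕ) (ht : 1 ≤ t) : 2 * t < 5 ^ t := by
  induction t with
  | zero => omega
  | succ t ih =>
    rcases Nat.eq_zero_or_pos t with h | h
    · subst h; norm_num
    · have := ih h
      have h5 : 1 ≤ 5 ^ t := Nat.one_le_pow _ _ (by norm_num)
      have : 5 ^ (t + 1) = 5 * 5 ^ t := by ring
      omega

lemma tow_strictMono : StrictMono tow := by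
  apply strictMono_nat_of_lt_succ
  intro n
  have h := tow_pos n
  calc tow n < 5 ^ tow n := Nat.lt_pow_self (by norm_num)
    _ = tow (n + 1) := rfl

theorem distribution_rank_lt (a b c : ℕ) (ha : 1 ≤ a) (hb : 1 ≤ b) (hc : 1 ≤ c) :
    5 ^ (tow (a + c) + tow (b + c)) < tow (5 ^ (a + b) + c) := by
  set m := max a b with hm
  have hsum : tow (a + c) + tow (b + c) ≤ 2 * tow (m + c) := by
    have h1 : tow (a + c) ≤ tow (m + c) :=
      tow_strictMono.monotone (by omega)
    have h2 : tow (b + c) ≤ tow (m + c) :=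
      tow_strictMono.monotone (by omega)
    omega
  have hlt : tow (a + c) + tow (b + c) < tow (m + c + 1) := by
    have := two_mul_lt_pow (tow (m + c)) (tow_pos _)
    have : 2 * tow (m + c) < tow (m + c + 1) := this
    omega
  have hab : m + 2 ≤ 5 ^ (a + b) := by
    have h2 : 2 * (a + b) < 5 ^ (a + b) := two_mul_lt_pow _ (by omega)
    omega
  have hk : m + c + 1 ≤ 5 ^ (a + b) + c - 1 := by omega
  have hN : 5 ^ (a + b) + c = (5 ^ (a + b) + c - 1) + 1 := by
    have : 1 ≤ 5 ^ (a + b) := Nat.one_le_pow _ _ (by norm_num)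
    omega
  have hfin : tow (a + c) + tow (b + c) < tow (5 ^ (a + b) + c - 1) :=
    lt_of_lt_of_le hlt (tow_strictMono.monotone hk)
  calc 5 ^ (tow (a + c) + tow (b + c))
      < 5 ^ tow (5 ^ (a + b) + c - 1) :=
        Nat.pow_lt_pow_right (by norm_num) hfin
    _ = tow (5 ^ (a + b) + c) := by rw [hN]; rfl
end

section
/- For all natural numbers a, b, c ≥ 1: ^(a+c) 5 + ^(b+c) 5 < ^(a+b+c) 5, where ^n 5 denotes tetration. (This justifies that the choice-Distribution step strictly reduces rank.) -/
lemma two_mul_lt_pow_s6 (k : ℕ) (hk : 1 ≤ k) : 2 * k < 5 ^ k := by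
  induction k with
  | zero => omega
  | succ k ih =>
    rcases Nat.eq_or_lt_of_le hk with h | h
    · simp [← h]
    · have h1 : 2 * k < 5 ^ k := ih (by omega)
      have h2 : 1 ≤ 5 ^ k := Nat.one_le_pow _ _ (by norm_num)
      have : 5 ^ (k + 1) = 5 * 5 ^ k := by ring
      omega

theorem tow_add_tow_lt (a b c : ℕ) (ha : 1 ≤ a) (hb : 1 ≤ b) (hc : 1 ≤ c) :
    tow (a + c) + tow (b + c) < tow (a + b + c) := by
  set m := max (a + c) (b + c) with hm
  have h1 : tow (a + c) ≤ tow m := tow_strictMono.monotone (le_max_left _ _)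
  have h2 : tow (b + c) ≤ tow m := tow_strictMono.monotone (le_max_right _ _)
  have h3 : 2 * tow m < tow (m + 1) := by
    show 2 * tow m < 5 ^ tow m
    exact two_mul_lt_pow_s6 _ (tow_pos m)
  have h4 : m + 1 ≤ a + b + c := by
    have := max_le_iff (a := a + c) (b := b + c) (c := a + b + c - 1)
    omega
  have h5 : tow (m + 1) ≤ tow (a + b + c) := tow_strictMono.monotone h4
  omega
end
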